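/- Let A ∈ ℝ^{I×F} and B ∈ ℝ^{J×F}, and suppose A ⊙ B denotes their Khatri-Rao product in ℝ^{IJ×F}. If both A and B have Kruskal rank at least 1 (no zero columns) and k_A + k_B ≥ F + 1, then A ⊙ B has full column rank F. -/

import Mathlib

/-- The Kruskal rank of a matrix: the largest `k ≤ F` such that every set of `k`
columns is linearly independent. -/
noncomputable def kruskalRank {m : Type*} {F : ℕ} (A : Matrix m (Fin F) ℝ) : ℕ :=
  sSup {k : ℕ | k ≤ F ∧ ∀ s : Finset (Fin F), s.card = k →
    LinearIndependent ℝ (fun j : s => fun i => A i (j : Fin F))}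

/-- The Khatri-Rao (column-wise Kronecker) product. -/
def khatriRao {I J : Type*} {F : ℕ} (A : Matrix I (Fin F) ℝ) (B : Matrix J (Fin F) ℝ) :
    Matrix (I × J) (Fin F) ℝ :=
  fun p f => A p.1 f * B p.2 f

/-- The Kruskal rank belongs to the defining set. -/
lemma kruskalRank_spec {m : Type*} {F : ℕ} (A : Matrix m (Fin F) ℝ) :
    kruskalRank A ≤ F ∧ ∀ s : Finset (Fin F), s.card = kruskalRank A →
      LinearIndependent ℝ (fun j : s => fun i => A i (j : Fin F)) := by
  have h0 : 0 ∈ {k : ℕ | k ≤ F ∧ ∀ s : Finset (Fin F), s.card = k →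
      LinearIndependent ℝ (fun j : s => fun i => A i (j : Fin F))} := by
    refine ⟨Nat.zero_le F, fun s hs => ?_⟩
    have hse : s = ∅ := Finset.card_eq_zero.mp hs
    subst hse
    haveI : IsEmpty ((∅ : Finset (Fin F)) : Finset (Fin F)) :=
      ⟨fun j => (Finset.notMem_empty _ j.2)⟩
    exact linearIndependent_empty_type
  exact Nat.sSup_mem ⟨0, h0⟩ ⟨F, fun k hk => hk.1⟩

/-- Any set of at most `k` columns is linearly independent. -/
lemma li_of_card_le {m : Type*} {F : ℕ} (A : Matrix m (Fin F) ℝ) {k : ℕ} (hkF : k ≤ F)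
    (h : ∀ s : Finset (Fin F), s.card = k →
      LinearIndependent ℝ (fun j : s => fun i => A i (j : Fin F)))
    (t : Finset (Fin F)) (ht : t.card ≤ k) :
    LinearIndependent ℝ (fun j : t => fun i => A i (j : Fin F)) := by
  obtain ⟨u, htu, -, hu⟩ := Finset.exists_subsuperset_card_eq (t.subset_univ) ht
    (by simpa [Finset.card_univ] using hkF)
  have hLI := h u hu
  have := hLI.comp (fun j : t => (⟨(j : Fin F), htu j.2⟩ : u))
    (fun a b hab => Subtype.ext (congrArg (fun x : u => (x : Fin F)) hab :))
  exact this

/-- A linearly independent family of columns bounds the rank from below. -/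
lemma card_le_rank {ι τ : Type*} [Fintype ι] [DecidableEq ι] [Fintype τ] {I : ℕ}
    (M : Matrix (Fin I) ι ℝ) (g : τ → ι)
    (h : LinearIndependent ℝ (fun j : τ => fun i => M i (g j))) :
    Fintype.card τ ≤ M.rank := by
  have hspan : Submodule.span ℝ (Set.range (fun j : τ => fun i => M i (g j))) ≤
      LinearMap.range M.mulVecLin := by
    rw [Submodule.span_le]
    rintro _ ⟨j, rfl⟩
    refine ⟨Pi.single (g j) 1, ?_⟩
    simp [Matrix.mulVecLin]
    rfl
  calc Fintype.card τ
      = Module.finrank ℝ (Submodule.span ℝ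
          (Set.range (fun j : τ => fun i => M i (g j)))) := (finrank_span_eq_card h).symm
    _ ≤ Module.finrank ℝ (LinearMap.range M.mulVecLin) := Submodule.finrank_mono hspan
    _ = M.rank := rfl

/-- If `M * N = 0` then the ranks add up to at most the inner dimension. -/
lemma rank_add_rank_le_of_mul_eq_zero {a b c : Type*} [Fintype a] [Fintype b] [Fintype c]
    (M : Matrix a b ℝ) (N : Matrix b c ℝ) (h : M * N = 0) :
    M.rank + N.rank ≤ Fintype.card b := by
  have hr : LinearMap.range N.mulVecLin ≤ LinearMap.ker M.mulVecLin := by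
    rintro _ ⟨x, rfl⟩
    have hx : (M * N).mulVecLin x = 0 := by rw [h]; simp
    rw [Matrix.mulVecLin_mul] at hx
    exact hx
  have h1 : N.rank ≤ Module.finrank ℝ (LinearMap.ker M.mulVecLin) :=
    Submodule.finrank_mono hr
  have h2 := LinearMap.finrank_range_add_finrank_ker M.mulVecLin
  have h3 : Module.finrank ℝ (b → ℝ) = Fintype.card b := Module.finrank_pi ℝ
  rw [h3] at h2
  have : M.rank = Module.finrank ℝ (LinearMap.range M.mulVecLin) := rfl
  omega

theorem stmt_13 (I J F : ℕ)
    (A : Matrix (Fin I) (Fin F) ℝ) (B : Matrix (Fin J) (Fin F) ℝ)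
    (hA : 1 ≤ kruskalRank A) (hB : 1 ≤ kruskalRank B)
    (hk : kruskalRank A + kruskalRank B ≥ F + 1) :
    ∀ v : Fin F → ℝ, (khatriRao A B).mulVec v = 0 → v = 0 := by
  classical
  intro v hv
  by_contra hne
  obtain ⟨hAF, hALI⟩ := kruskalRank_spec A
  obtain ⟨hBF, hBLI⟩ := kruskalRank_spec B
  set kA := kruskalRank A with hkA
  set kB := kruskalRank B with hkB
  -- support of v
  set s : Finset (Fin F) := Finset.univ.filter (fun f => v f ≠ 0) with hs
  have hmem : ∀ f : Fin F, f ∈ s ↔ v f ≠ 0 := by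
    intro f; simp [hs]
  have hn1 : 1 ≤ s.card := by
    rcases Function.ne_iff.mp hne with ⟨f, hf⟩
    exact Finset.card_pos.mpr ⟨f, (hmem f).mpr (by simpa using hf)⟩
  have hnF : s.card ≤ F := by
    simpa [Finset.card_univ] using Finset.card_le_card (s.subset_univ)
  set n := s.card with hn
  -- restricted matrices
  set As : Matrix (Fin I) s ℝ := Matrix.of (fun i (j : s) => A i (j : Fin F)) with hAs
  set Bs : Matrix (Fin J) s ℝ := Matrix.of (fun i (j : s) => B i (j : Fin F)) with hBs
  set D : Matrix s s ℝ := Matrix.diagonal (fun j : s => v (j : Fin F)) with hD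
  have hdet : IsUnit D.det := by
    rw [hD, Matrix.det_diagonal]
    refine isUnit_iff_ne_zero.mpr (Finset.prod_ne_zero_iff.mpr ?_)
    intro j _
    exact (hmem j).mp j.2
  -- the key identity
  have hzero : (As * D) * Bs.transpose = 0 := by
    ext i j
    have hij := congrFun hv (i, j)
    simp only [Matrix.mulVec, dotProduct, khatriRao, Pi.zero_apply] at hij
    have hstep : ∑ k : s, A i (k : Fin F) * v (k : Fin F) * B j (k : Fin F)
        = ∑ f ∈ s, A i f * v f * B j f :=
      Finset.sum_coe_sort s (fun f => A i f * v f * B j f)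
    have hfull : ∑ f ∈ s, A i f * v f * B j f = ∑ f : Fin F, A i f * v f * B j f := by
      refine Finset.sum_subset (s.subset_univ) ?_
      intro f _ hf
      have : v f = 0 := by
        by_contra hvf
        exact hf ((hmem f).mpr hvf)
      simp [this]
    have hz : ∑ f : Fin F, A i f * v f * B j f = 0 := by
      rw [← hij]
      exact Finset.sum_congr rfl (fun f _ => by ring)
    have hentry : ((As * D) * Bs.transpose) i j
        = ∑ k : s, A i (k : Fin F) * v (k : Fin F) * B j (k : Fin F) := by
      rw [Matrix.mul_assoc, Matrix.mul_apply]
      refine Finset.sum_congr rfl (fun k _ => ?_)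
      rw [Matrix.diagonal_mul]
      show A i (k : Fin F) * (v (k : Fin F) * B j (k : Fin F)) = _
      ring
    rw [Matrix.zero_apply, hentry, hstep, hfull, hz]
  -- rank inequality from the zero product
  have hcard : Fintype.card s = n := Fintype.card_coe s
  have hsum : As.rank + Bs.rank ≤ n := by
    have h1 := rank_add_rank_le_of_mul_eq_zero (As * D) Bs.transpose hzero
    rw [Matrix.rank_mul_eq_left_of_isUnit_det D As hdet, Matrix.rank_transpose, hcard] at h1
    exact h1
  -- lower bounds on the ranks
  have hrankA : min n kA ≤ As.rank := by
    obtain ⟨t, hts, htc⟩ := Finset.exists_subset_card_eq (min_le_left n kA : min n kA ≤ s.card)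
    have hLI := li_of_card_le A hAF hALI t (htc.le.trans (min_le_right n kA))
    have := card_le_rank As (fun j : t => (⟨(j : Fin F), hts j.2⟩ : s)) hLI
    rwa [Fintype.card_coe, htc] at this
  have hrankB : min n kB ≤ Bs.rank := by
    obtain ⟨t, hts, htc⟩ := Finset.exists_subset_card_eq (min_le_left n kB : min n kB ≤ s.card)
    have hLI := li_of_card_le B hBF hBLI t (htc.le.trans (min_le_right n kB))
    have := card_le_rank Bs (fun j : t => (⟨(j : Fin F), hts j.2⟩ : s)) hLI
    rwa [Fintype.card_coe, htc] at this
  omega
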